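/- Let H be an ℵ₀-monoid and x ∈ H with a + ℵ₀·x = ℵ₀·x for some a ∈ H. Then for every finite n ≥ 1, n·a + ℵ₀·x = ℵ₀·x, and moreover ℵ₀·a + ℵ₀·x = ℵ₀·x. -/
import Mathlib


/-- An ℵ₀-monoid: a set with 0 and a countable summation map satisfying (A1) and (A2). -/
structure AlephMonoid (H : Type*) where
  zero : H
  sum : (ℕ → H) → H
  a1 : ∀ x : ℕ → H, (∀ i, i ≠ 0 → x i = zero) → sum x = x 0
  a2 : ∀ (x : ℕ × ℕ → H) (π : ℕ × ℕ ≃ ℕ),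
    sum (fun i => sum (fun j => x (i, j))) = sum (fun k => x (π.symm k))

namespace AlephMonoid

variable {H : Type*}

/-- The induced binary addition. -/
def add (M : AlephMonoid H) (a b : H) : H :=
  M.sum (fun i => if i = 0 then a else if i = 1 then b else M.zero)

/-- ℵ₀·a : the countable sum of copies of `a`. -/
def infMul (M : AlephMonoid H) (a : H) : H := M.sum (fun _ => a)

/-- n·a : finite multiples. -/
def nsmul (M : AlephMonoid H) : ℕ → H → H
  | 0, _ => M.zero
  | n + 1, a => M.add a (M.nsmul n a)

/-- `y ∈ add(x)` : `y` is a direct summand of a finite multiple of `x`. -/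
def inAdd (M : AlephMonoid H) (x y : H) : Prop :=
  ∃ z : H, ∃ n : ℕ, 1 ≤ n ∧ M.add y z = M.nsmul n x

/-- Multiplication by a cardinal α with 0 ≤ α ≤ ℵ₀ (`none` stands for ℵ₀). -/
def cmul (M : AlephMonoid H) : Option ℕ → H → H
  | some n, a => M.nsmul n a
  | none, a => M.infMul a

/-- The finite sum `Σ_{i=a}^{b} f i`, expressed via the countable sum of a
family supported on the interval `[a, b]`. -/
def intervalSum (M : AlephMonoid H) (f : ℕ → H) (a b : ℕ) : H :=
  M.sum (fun i => if a ≤ i ∧ i ≤ b then f i else M.zero)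

end AlephMonoid

namespace AlephMonoid

variable {H : Type*} (M : AlephMonoid H)

lemma sum_zero' : M.sum (fun _ => M.zero) = M.zero :=
  M.a1 _ (fun _ _ => rfl)

lemma sum_perm (σ : ℕ ≃ ℕ) (f : ℕ → H) :
    M.sum (fun i => f (σ i)) = M.sum f := by
  classical
  set p : ℕ × ℕ ≃ ℕ := Denumerable.eqv (ℕ × ℕ) with hp
  set y : ℕ × ℕ → H := fun q => if q.2 = 0 then f q.1 else M.zero with hy
  have hrow : ∀ i, M.sum (fun j => y (i, j)) = f i := by
    intro i
    have h1 : ∀ j, j ≠ 0 → (fun j => y (i, j)) j = M.zero := by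
      intro j hj; simp [hy, hj]
    simpa [hy] using M.a1 (fun j => y (i, j)) h1
  have h1 : M.sum f = M.sum (fun k => y (p.symm k)) := by
    have := M.a2 y p
    calc M.sum f = M.sum (fun i => M.sum (fun j => y (i, j))) := by
          refine congrArg M.sum ?_; funext i; exact (hrow i).symm
      _ = M.sum (fun k => y (p.symm k)) := this
  set y' : ℕ × ℕ → H := fun q => y (σ q.1, q.2) with hy'
  set π' : ℕ × ℕ ≃ ℕ := (Equiv.prodCongr σ (Equiv.refl ℕ)).trans p with hπ'
  have hrow' : ∀ i, M.sum (fun j => y' (i, j)) = f (σ i) := by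
    intro i
    have h1 : ∀ j, j ≠ 0 → (fun j => y' (i, j)) j = M.zero := by
      intro j hj; simp [hy', hy, hj]
    simpa [hy', hy] using M.a1 (fun j => y' (i, j)) h1
  have h2 : M.sum (fun i => f (σ i)) = M.sum (fun k => y' (π'.symm k)) := by
    have := M.a2 y' π'
    calc M.sum (fun i => f (σ i)) = M.sum (fun i => M.sum (fun j => y' (i, j))) := by
          refine congrArg M.sum ?_; funext i; exact (hrow' i).symm
      _ = M.sum (fun k => y' (π'.symm k)) := this
  have h3 : (fun k => y' (π'.symm k)) = (fun k => y (p.symm k)) := by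
    funext k
    simp [hy', hπ', Equiv.prodCongr]
  rw [h2, h3, ← h1]

lemma sum_single (n : ℕ) (c : H) :
    M.sum (fun i => if i = n then c else M.zero) = c := by
  classical
  have ha : ∀ i, i ≠ 0 →
      (fun i => if Equiv.swap 0 n i = n then c else M.zero) i = M.zero := by
    intro i hi
    have hne : Equiv.swap 0 n i ≠ n := by
      intro hcon
      exact hi ((Equiv.swap 0 n).injective (by rw [hcon, Equiv.swap_apply_left]))
    simp [hne]
  calc M.sum (fun i => if i = n then c else M.zero)
      = M.sum (fun i => if Equiv.swap 0 n i = n then c else M.zero) :=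
        (M.sum_perm (Equiv.swap 0 n) (fun i => if i = n then c else M.zero)).symm
    _ = c := by simpa [Equiv.swap_apply_left] using M.a1 _ ha

lemma sum_swap (w : ℕ × ℕ → H) :
    M.sum (fun i => M.sum (fun j => w (i, j))) =
    M.sum (fun i => M.sum (fun j => w (j, i))) := by
  classical
  set p : ℕ × ℕ ≃ ℕ := Denumerable.eqv (ℕ × ℕ) with hp
  have h1 := M.a2 w p
  set x : ℕ × ℕ → H := fun q => w (q.2, q.1) with hx
  set π' : ℕ × ℕ ≃ ℕ := (Equiv.prodComm ℕ ℕ).trans p with hπ'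
  have h2 := M.a2 x π'
  have h3 : (fun k => x (π'.symm k)) = (fun k => w (p.symm k)) := by
    funext k; simp [hx, hπ']
  rw [h1, ← h3, ← h2]

lemma add_zero' (u : H) : M.add u M.zero = u := by
  have : ∀ i, i ≠ 0 →
      (fun i => if i = 0 then u else if i = 1 then M.zero else M.zero) i = M.zero := by
    intro i hi; simp [hi]
  exact M.a1 _ this

lemma add_assoc' (a b c : H) :
    M.add (M.add a b) c = M.add a (M.add b c) := by
  classical
  set w : ℕ × ℕ → H := fun q =>
    if q.1 = 0 ∧ q.2 = 0 then a else if q.1 = 1 ∧ q.2 = 0 then b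
    else if q.1 = 1 ∧ q.2 = 1 then c else M.zero with hw
  have hrows : (fun i => M.sum (fun j => w (i, j))) =
      (fun i => if i = 0 then a else if i = 1 then M.add b c else M.zero) := by
    funext i
    match i with
    | 0 =>
      have : ∀ j, j ≠ 0 → (fun j => w (0, j)) j = M.zero := by
        intro j hj; simp [hw, hj]
      simpa [hw] using M.a1 _ this
    | 1 =>
      show M.sum (fun j => w (1, j)) = M.add b c
      refine congrArg M.sum ?_
      funext j; simp [hw, add]
    | (n+2) =>
      have : ∀ j, j ≠ 0 → (fun j => w (n+2, j)) j = M.zero := by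
        intro j hj; simp [hw]
      simpa [hw] using M.a1 _ this
  have hcols : (fun i => M.sum (fun j => w (j, i))) =
      (fun i => if i = 0 then M.add a b else if i = 1 then c else M.zero) := by
    funext i
    match i with
    | 0 =>
      show M.sum (fun j => w (j, 0)) = M.add a b
      refine congrArg M.sum ?_
      funext j
      match j with
      | 0 => simp [hw, add]
      | 1 => simp [hw, add]
      | (m+2) => simp [hw, add]
    | 1 =>
      have : M.sum (fun j => w (j, 1)) = c := by
        have heq : (fun j => w (j, 1)) = (fun j => if j = 1 then c else M.zero) := by
          funext j
          match j with
          | 0 => simp [hw]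
          | 1 => simp [hw]
          | (m+2) => simp [hw]
        rw [heq]; exact M.sum_single 1 c
      simpa using this
    | (n+2) =>
      have : ∀ j, j ≠ 0 → True := fun _ _ => trivial
      have hz : (fun j => w (j, n+2)) = (fun _ => M.zero) := by
        funext j; simp [hw]
      show M.sum (fun j => w (j, n+2)) = M.zero
      rw [hz]; exact M.sum_zero'
  have := M.sum_swap w
  rw [hrows, hcols] at this
  exact this.symm

lemma infMul_infMul (u : H) : M.infMul (M.infMul u) = M.infMul u := by
  have := M.a2 (fun _ => u) (Denumerable.eqv (ℕ × ℕ))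
  simpa [infMul] using this

lemma infMul_add (u v : H) :
    M.infMul (M.add u v) = M.add (M.infMul u) (M.infMul v) := by
  classical
  set z : ℕ × ℕ → H := fun q =>
    if q.2 = 0 then u else if q.2 = 1 then v else M.zero with hz
  have hrows : (fun i => M.sum (fun j => z (i, j))) = (fun _ : ℕ => M.add u v) := by
    funext i
    refine congrArg M.sum ?_
    funext j; simp [hz, add]
  have hcols : (fun i => M.sum (fun j => z (j, i))) =
      (fun i => if i = 0 then M.infMul u else if i = 1 then M.infMul v else M.zero) := by
    funext i
    match i with
    | 0 =>
      show M.sum (fun j => z (j, 0)) = M.infMul u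
      refine congrArg M.sum ?_; funext j; simp [hz]
    | 1 =>
      show M.sum (fun j => z (j, 1)) = M.infMul v
      refine congrArg M.sum ?_; funext j; simp [hz]
    | (n+2) =>
      show M.sum (fun j => z (j, n+2)) = M.zero
      have hzz : (fun j => z (j, n+2)) = (fun _ => M.zero) := by
        funext j; simp [hz]
      rw [hzz]; exact M.sum_zero'
  have := M.sum_swap z
  rw [hrows, hcols] at this
  exact this

end AlephMonoid

/-- if a + ℵ₀·x = ℵ₀·x then n·a + ℵ₀·x = ℵ₀·x for every finite n ≥ 1,
and moreover ℵ₀·a + ℵ₀·x = ℵ₀·x. -/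
theorem absorb_nsmul_and_infMul {H : Type*} (M : AlephMonoid H) (x a : H)
    (h : M.add a (M.infMul x) = M.infMul x) :
    (∀ n : ℕ, 1 ≤ n → M.add (M.nsmul n a) (M.infMul x) = M.infMul x) ∧
    M.add (M.infMul a) (M.infMul x) = M.infMul x := by
  have key : M.add (M.infMul a) (M.infMul x) = M.infMul x := by
    calc M.add (M.infMul a) (M.infMul x)
        = M.add (M.infMul a) (M.infMul (M.infMul x)) := by rw [M.infMul_infMul]
      _ = M.infMul (M.add a (M.infMul x)) := (M.infMul_add a (M.infMul x)).symm
      _ = M.infMul (M.infMul x) := by rw [h]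
      _ = M.infMul x := M.infMul_infMul x
  refine ⟨?_, key⟩
  intro n hn
  induction n with
  | zero => omega
  | succ m ih =>
    match m, ih with
    | 0, _ =>
      show M.add (M.add a (M.nsmul 0 a)) (M.infMul x) = M.infMul x
      have : M.nsmul 0 a = M.zero := rfl
      rw [this, M.add_zero', h]
    | (k+1), ih =>
      have hk := ih (by omega)
      show M.add (M.add a (M.nsmul (k+1) a)) (M.infMul x) = M.infMul x
      rw [M.add_assoc', hk, h]
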